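/- arXiv:1410.4408 — 2 statements merged into one kernel-verified Lean document; each statement's English description precedes it below -/
import Mathlib

section
/- Let g : ℝ → ℝ be continuous, bounded (|g(t)| ≤ M for all t ≥ 0), and persistently exciting in the sense that there exist T > 0 and μ > 0 with ∫_t^{t+T} g(s)^2 ds ≥ μ for all t ≥ 0. Let λ > 0, k a positive even integer, and let R solve Ṙ = -λR + g(t)^k with R(0) > 0. Then there exist constants R_min, R_max > 0 such that R_min ≤ R(t) ≤ R_max for all t ≥ 0. -/
open Real

/-- Persistence filter with constant gain: boundedness above and below of `R`. -/
theorem stmt_0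
    (g : ℝ → ℝ) (hg_cont : Continuous g)
    (M : ℝ) (hM : ∀ t ≥ (0:ℝ), |g t| ≤ M)
    (T μ : ℝ) (hT : 0 < T) (hμ : 0 < μ)
    (hPE : ∀ t ≥ (0:ℝ), μ ≤ ∫ s in t..(t + T), (g s) ^ 2)
    (lam : ℝ) (hlam : 0 < lam)
    (k : ℕ) (hk : 0 < k) (hkeven : Even k)
    (R : ℝ → ℝ)
    (hR : ∀ t ≥ (0:ℝ), HasDerivAt R (-lam * R t + (g t) ^ k) t)
    (hR0 : 0 < R 0) :
    ∃ Rmin Rmax : ℝ, 0 < Rmin ∧ 0 < Rmax ∧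
      ∀ t ≥ (0:ℝ), Rmin ≤ R t ∧ R t ≤ Rmax := by
  obtain ⟨m, hm⟩ := hkeven
  have hm1 : 1 ≤ m := by omega
  have hk2m : ∀ x : ℝ, x ^ k = (x ^ 2) ^ m := by
    intro x; rw [hm, ← pow_mul]; ring_nf
  have hM0 : 0 ≤ M := le_trans (abs_nonneg _) (hM 0 le_rfl)
  set δ : ℝ := μ / (2 * T) with hδdef
  have hδ : 0 < δ := by positivity
  set μ' : ℝ := δ ^ (m - 1) * (μ / 2) with hμ'def
  have hμ'pos : 0 < μ' := by positivity
  -- pointwise inequality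
  have hpoint : ∀ x : ℝ, δ ^ (m - 1) * x ^ 2 ≤ δ ^ m + (x ^ 2) ^ m := by
    intro x
    have hx2 : (0:ℝ) ≤ x ^ 2 := sq_nonneg x
    by_cases h : x ^ 2 ≤ δ
    · have h1 : δ ^ (m - 1) * x ^ 2 ≤ δ ^ (m - 1) * δ :=
        mul_le_mul_of_nonneg_left h (by positivity)
      have h2 : δ ^ (m - 1) * δ = δ ^ m := by
        rw [← pow_succ]; congr 1; omega
      have h3 : (0:ℝ) ≤ (x ^ 2) ^ m := by positivity
      linarith [h1, h2 ▸ h1]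
    · push_neg at h
      have h1 : δ ^ (m - 1) ≤ (x ^ 2) ^ (m - 1) :=
        pow_le_pow_left₀ hδ.le h.le _
      have h2 : δ ^ (m - 1) * x ^ 2 ≤ (x ^ 2) ^ (m - 1) * x ^ 2 :=
        mul_le_mul_of_nonneg_right h1 hx2
      have h3 : (x ^ 2) ^ (m - 1) * x ^ 2 = (x ^ 2) ^ m := by
        rw [← pow_succ]; congr 1; omega
      have h4 : (0:ℝ) ≤ δ ^ m := by positivity
      linarith [h3 ▸ h2]
  have hgk_cont : Continuous fun s => (g s) ^ k := hg_cont.pow k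
  have hgk_nonneg : ∀ s, 0 ≤ (g s) ^ k := fun s => by
    rw [hk2m]; positivity
  have hgk_le : ∀ s ≥ (0:ℝ), (g s) ^ k ≤ M ^ k := by
    intro s hs
    calc (g s) ^ k = |g s| ^ k := by
          rw [← abs_pow, abs_of_nonneg (hgk_nonneg s)]
      _ ≤ M ^ k := pow_le_pow_left₀ (abs_nonneg _) (hM s hs) k
  -- key: lower bound for ∫ g^k on windows
  have hkey : ∀ u ≥ (0:ℝ), μ' ≤ ∫ s in u..(u + T), (g s) ^ k := by
    intro u hu
    have hPEu := hPE u hu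
    have hint1 : IntervalIntegrable (fun s => (g s) ^ 2) MeasureTheory.volume u (u + T) :=
      (hg_cont.pow 2).intervalIntegrable _ _
    have hint2 : IntervalIntegrable (fun s => δ ^ m + (g s) ^ k) MeasureTheory.volume u (u + T) :=
      (continuous_const.add hgk_cont).intervalIntegrable _ _
    have hmono : ∫ s in u..(u + T), δ ^ (m - 1) * (g s) ^ 2
        ≤ ∫ s in u..(u + T), (δ ^ m + (g s) ^ k) := by
      apply intervalIntegral.integral_mono_on (by linarith)
        ((continuous_const.mul (hg_cont.pow 2)).intervalIntegrable _ _) hint2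
      intro s _
      have := hpoint (g s)
      rw [hk2m (g s)]
      show δ ^ (m - 1) * (g s) ^ 2 ≤ δ ^ m + ((g s) ^ 2) ^ m
      linarith
    have hlhs : ∫ s in u..(u + T), δ ^ (m - 1) * (g s) ^ 2
        = δ ^ (m - 1) * ∫ s in u..(u + T), (g s) ^ 2 := by
      rw [intervalIntegral.integral_const_mul]
    have hrhs : ∫ s in u..(u + T), (δ ^ m + (g s) ^ k)
        = δ ^ m * T + ∫ s in u..(u + T), (g s) ^ k := by
      rw [intervalIntegral.integral_add (intervalIntegrable_const) (hgk_cont.intervalIntegrable _ _)]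
      rw [intervalIntegral.integral_const]
      simp [smul_eq_mul]
      ring
    have h1 : δ ^ (m - 1) * μ ≤ δ ^ (m - 1) * ∫ s in u..(u + T), (g s) ^ 2 :=
      mul_le_mul_of_nonneg_left hPEu (by positivity)
    have hδm : δ ^ m * T = δ ^ (m - 1) * (μ / 2) := by
      have : δ ^ m = δ ^ (m - 1) * δ := by rw [← pow_succ]; congr 1; omega
      rw [this, hδdef]
      field_simp
    rw [hlhs] at hmono
    rw [hrhs, hδm] at hmono
    have := le_trans h1 hmono
    rw [hμ'def]
    linarith
  -- variation of constants
  have hFTC : ∀ t ≥ (0:ℝ), Real.exp (lam * t) * R t - R 0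
      = ∫ s in (0:ℝ)..t, Real.exp (lam * s) * (g s) ^ k := by
    intro t ht
    have hderiv : ∀ s ∈ Set.uIcc (0:ℝ) t,
        HasDerivAt (fun x => Real.exp (lam * x) * R x) (Real.exp (lam * s) * (g s) ^ k) s := by
      intro s hs
      rw [Set.uIcc_of_le ht] at hs
      have hs0 : (0:ℝ) ≤ s := hs.1
      have h1 : HasDerivAt (fun x => Real.exp (lam * x)) (lam * Real.exp (lam * s)) s := by
        have := (Real.hasDerivAt_exp (lam * s)).comp s ((hasDerivAt_id s).const_mul lam)
        simpa [mul_comm, Function.comp_def] using this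
      have h2 := h1.mul (hR s hs0)
      refine h2.congr_deriv ?_
      ring
    have := intervalIntegral.integral_eq_sub_of_hasDerivAt hderiv
      (((Real.continuous_exp.comp (continuous_const.mul continuous_id)).mul hgk_cont).intervalIntegrable _ _)
    rw [this]
    simp
  refine ⟨Real.exp (-lam * T) * min (R 0) μ', R 0 + M ^ k / lam,
    by positivity, by positivity, ?_⟩
  intro t ht
  have hFt := hFTC t ht
  have hexp_pos : (0:ℝ) < Real.exp (lam * t) := Real.exp_pos _
  constructor
  · -- lower bound
    by_cases hcase : t ≤ T
    · -- R t ≥ exp(-lam t) R 0 ≥ exp(-lam T) R 0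
      have hint_nonneg : 0 ≤ ∫ s in (0:ℝ)..t, Real.exp (lam * s) * (g s) ^ k := by
        apply intervalIntegral.integral_nonneg ht
        intro s _
        exact mul_nonneg (Real.exp_pos _).le (hgk_nonneg s)
      have h1 : Real.exp (lam * t) * R t ≥ R 0 := by linarith
      have h2 : Real.exp (-lam * T) * min (R 0) μ' ≤ Real.exp (-lam * t) * R 0 := by
        have hmin : min (R 0) μ' ≤ R 0 := min_le_left _ _
        have hexpm : Real.exp (-lam * T) ≤ Real.exp (-lam * t) := by
          apply Real.exp_le_exp.mpr; nlinarith
        have hminpos : 0 < min (R 0) μ' := lt_min hR0 hμ'pos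
        calc Real.exp (-lam * T) * min (R 0) μ' ≤ Real.exp (-lam * t) * min (R 0) μ' :=
              mul_le_mul_of_nonneg_right hexpm hminpos.le
          _ ≤ Real.exp (-lam * t) * R 0 :=
              mul_le_mul_of_nonneg_left hmin (Real.exp_pos _).le
      have h3 : Real.exp (-lam * t) * R 0 ≤ R t := by
        have := mul_le_mul_of_nonneg_left h1 (Real.exp_pos (-lam * t)).le
        have hexpinv : Real.exp (-lam * t) * Real.exp (lam * t) = 1 := by
          rw [← Real.exp_add]; ring_nf; exact Real.exp_zero
        nlinarith
      linarith
    · -- t > T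
      push_neg at hcase
      have huT : (0:ℝ) ≤ t - T := by linarith
      have hsplit : (∫ s in (0:ℝ)..(t - T), Real.exp (lam * s) * (g s) ^ k)
          + (∫ s in (t - T)..t, Real.exp (lam * s) * (g s) ^ k)
          = ∫ s in (0:ℝ)..t, Real.exp (lam * s) * (g s) ^ k := by
        apply intervalIntegral.integral_add_adjacent_intervals <;>
          exact ((Real.continuous_exp.comp (continuous_const.mul continuous_id)).mul hgk_cont).intervalIntegrable _ _
      have h1 : 0 ≤ ∫ s in (0:ℝ)..(t - T), Real.exp (lam * s) * (g s) ^ k := by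
        apply intervalIntegral.integral_nonneg huT
        intro s _
        exact mul_nonneg (Real.exp_pos _).le (hgk_nonneg s)
      have h2 : Real.exp (lam * (t - T)) * μ' ≤ ∫ s in (t - T)..t, Real.exp (lam * s) * (g s) ^ k := by
        have hmono2 : ∫ s in (t - T)..t, Real.exp (lam * (t - T)) * (g s) ^ k
            ≤ ∫ s in (t - T)..t, Real.exp (lam * s) * (g s) ^ k := by
          apply intervalIntegral.integral_mono_on (by linarith)
            ((continuous_const.mul hgk_cont).intervalIntegrable _ _)
            (((Real.continuous_exp.comp (continuous_const.mul continuous_id)).mul hgk_cont).intervalIntegrable _ _)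
          intro s hs
          apply mul_le_mul_of_nonneg_right _ (hgk_nonneg s)
          exact Real.exp_le_exp.mpr (mul_le_mul_of_nonneg_left hs.1 hlam.le)
        have hconstmul : ∫ s in (t - T)..t, Real.exp (lam * (t - T)) * (g s) ^ k
            = Real.exp (lam * (t - T)) * ∫ s in (t - T)..t, (g s) ^ k := by
          rw [intervalIntegral.integral_const_mul]
        have hkeyt := hkey (t - T) huT
        rw [show t - T + T = t by ring] at hkeyt
        have : Real.exp (lam * (t - T)) * μ' ≤ Real.exp (lam * (t - T)) * ∫ s in (t - T)..t, (g s) ^ k :=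
          mul_le_mul_of_nonneg_left hkeyt (Real.exp_pos _).le
        linarith [hconstmul ▸ hmono2]
      have hmain : Real.exp (lam * (t - T)) * μ' ≤ Real.exp (lam * t) * R t := by
        have hR0' : (0:ℝ) < R 0 := hR0
        linarith
      have hminle : min (R 0) μ' ≤ μ' := min_le_right _ _
      have hgoal : Real.exp (-lam * T) * min (R 0) μ' ≤ R t := by
        have hid : Real.exp (lam * (t - T)) = Real.exp (lam * t) * Real.exp (-lam * T) := by
          rw [← Real.exp_add]; ring_nf
        rw [hid] at hmain
        have hminpos : 0 < min (R 0) μ' := lt_min hR0 hμ'pos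
        have h5 : Real.exp (lam * t) * (Real.exp (-lam * T) * min (R 0) μ')
            ≤ Real.exp (lam * t) * R t := by
          calc Real.exp (lam * t) * (Real.exp (-lam * T) * min (R 0) μ')
              ≤ Real.exp (lam * t) * (Real.exp (-lam * T) * μ') := by
                apply mul_le_mul_of_nonneg_left _ hexp_pos.le
                exact mul_le_mul_of_nonneg_left hminle (Real.exp_pos _).le
            _ ≤ Real.exp (lam * t) * R t := by linarith
        exact le_of_mul_le_mul_left h5 hexp_pos
      exact hgoal
  · -- upper bound
    have hintle : ∫ s in (0:ℝ)..t, Real.exp (lam * s) * (g s) ^ k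
        ≤ ∫ s in (0:ℝ)..t, Real.exp (lam * s) * M ^ k := by
      apply intervalIntegral.integral_mono_on ht
        (((Real.continuous_exp.comp (continuous_const.mul continuous_id)).mul hgk_cont).intervalIntegrable _ _)
        (((Real.continuous_exp.comp (continuous_const.mul continuous_id)).mul continuous_const).intervalIntegrable _ _)
      intro s hs
      exact mul_le_mul_of_nonneg_left (hgk_le s hs.1) (Real.exp_pos _).le
    have hcompute : ∫ s in (0:ℝ)..t, Real.exp (lam * s) * M ^ k
        = M ^ k / lam * (Real.exp (lam * t) - 1) := by
      have hderiv : ∀ s ∈ Set.uIcc (0:ℝ) t,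
          HasDerivAt (fun x => M ^ k / lam * Real.exp (lam * x)) (Real.exp (lam * s) * M ^ k) s := by
        intro s _
        have h1 : HasDerivAt (fun x => Real.exp (lam * x)) (lam * Real.exp (lam * s)) s := by
          have := (Real.hasDerivAt_exp (lam * s)).comp s ((hasDerivAt_id s).const_mul lam)
          simpa [mul_comm, Function.comp_def] using this
        have h2 := h1.const_mul (M ^ k / lam)
        refine h2.congr_deriv ?_
        field_simp [hlam.ne']
      rw [intervalIntegral.integral_eq_sub_of_hasDerivAt hderiv
        (((Real.continuous_exp.comp (continuous_const.mul continuous_id)).mul continuous_const).intervalIntegrable _ _)]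
      simp
      ring
    have hMk : (0:ℝ) ≤ M ^ k := by
      have := hgk_le 0 le_rfl
      linarith [hgk_nonneg 0]
    have h6 : Real.exp (lam * t) * R t ≤ R 0 + M ^ k / lam * (Real.exp (lam * t) - 1) := by
      linarith
    have h7 : Real.exp (lam * t) * R t ≤ Real.exp (lam * t) * (R 0 + M ^ k / lam) := by
      have hexpge : (1:ℝ) ≤ Real.exp (lam * t) := by
        rw [show (1:ℝ) = Real.exp 0 by simp]
        exact Real.exp_le_exp.mpr (by positivity)
      nlinarith [hR0, hMk, div_nonneg hMk hlam.le]
    exact le_of_mul_le_mul_left h7 hexp_pos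
end

section
/- Let λ̂ : ℝ≥0 → ℝ be continuous with 0 < λ̂_min ≤ λ̂(t) ≤ λ̂_max for all t ≥ 0, and let g : ℝ → ℝ be continuous, bounded, with g(t)^k ≥ 0 and satisfying ∫_t^{t+T} g(s)^k ds ≥ μ > 0 for all t ≥ 0 (for some fixed T > 0). Then the solution of Ṙ = -λ̂(t) R + g(t)^k with R(0) > 0 satisfies 0 < R_min ≤ R(t) ≤ R_max for all t ≥ 0, for some constants R_min, R_max. -/
open Real MeasureTheory intervalIntegral

/-- Persistence filter with bounded time-varying gain `λ̂`. -/
theorem stmt_1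
    (lamHat : ℝ → ℝ) (hlam_cont : Continuous lamHat)
    (lamMin lamMax : ℝ) (hlamMin : 0 < lamMin)
    (hlam_bd : ∀ t ≥ (0:ℝ), lamMin ≤ lamHat t ∧ lamHat t ≤ lamMax)
    (g : ℝ → ℝ) (hg_cont : Continuous g)
    (M : ℝ) (hM : ∀ t ≥ (0:ℝ), |g t| ≤ M)
    (k : ℕ) (hgk : ∀ t ≥ (0:ℝ), 0 ≤ (g t) ^ k)
    (T μ : ℝ) (hT : 0 < T) (hμ : 0 < μ)
    (hPE : ∀ t ≥ (0:ℝ), μ ≤ ∫ s in t..(t + T), (g s) ^ k)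
    (R : ℝ → ℝ)
    (hR : ∀ t ≥ (0:ℝ), HasDerivAt R (-(lamHat t) * R t + (g t) ^ k) t)
    (hR0 : 0 < R 0) :
    ∃ Rmin Rmax : ℝ, 0 < Rmin ∧ 0 < Rmax ∧
      ∀ t ≥ (0:ℝ), Rmin ≤ R t ∧ R t ≤ Rmax := by
  set Λ : ℝ → ℝ := fun t => ∫ s in (0:ℝ)..t, lamHat s with hΛdef
  have hΛd : ∀ t : ℝ, HasDerivAt Λ (lamHat t) t := by
    intro t
    exact intervalIntegral.integral_hasDerivAt_right
      (hlam_cont.intervalIntegrable 0 t)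
      (hlam_cont.stronglyMeasurableAtFilter _ _)
      hlam_cont.continuousAt
  have hΛcont : Continuous Λ := by
    have : Differentiable ℝ Λ := fun t => (hΛd t).differentiableAt
    exact this.continuous
  have hΛ0 : Λ 0 = 0 := intervalIntegral.integral_same
  -- difference bounds on Λ
  have hΛdiff : ∀ a b : ℝ, Λ b - Λ a = ∫ s in a..b, lamHat s := by
    intro a b
    simp only [hΛdef]
    exact intervalIntegral.integral_interval_sub_left
      (hlam_cont.intervalIntegrable 0 b) (hlam_cont.intervalIntegrable 0 a)
  have hΛub : ∀ a b : ℝ, 0 ≤ a → a ≤ b → Λ b - Λ a ≤ lamMax * (b - a) := by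
    intro a b ha hab
    rw [hΛdiff]
    calc (∫ s in a..b, lamHat s) ≤ ∫ s in a..b, lamMax := by
          apply intervalIntegral.integral_mono_on hab
            (hlam_cont.intervalIntegrable a b) (intervalIntegrable_const)
          intro x hx
          exact (hlam_bd x (le_trans ha hx.1)).2
      _ = lamMax * (b - a) := by simp [mul_comm]
  have hΛnn : ∀ t : ℝ, 0 ≤ t → 0 ≤ Λ t := by
    intro t ht
    have : (0:ℝ) ≤ ∫ s in (0:ℝ)..t, lamHat s := by
      apply intervalIntegral.integral_nonneg ht
      intro x hx
      exact le_of_lt (lt_of_lt_of_le hlamMin (hlam_bd x hx.1).1)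
    simpa [hΛdef] using this
  -- F = R * exp Λ
  set F : ℝ → ℝ := fun t => R t * exp (Λ t) with hFdef
  have hFd : ∀ t ≥ (0:ℝ), HasDerivAt F (exp (Λ t) * g t ^ k) t := by
    intro t ht
    have h1 := (hR t ht).mul ((hΛd t).exp)
    convert h1 using 1
    · rfl
    · rfl
    · rfl
    · ring
  have hcontI : Continuous fun u => exp (Λ u) * g u ^ k :=
    (hΛcont.rexp).mul (hg_cont.pow k)
  have hFeq : ∀ t : ℝ, 0 ≤ t →
      F t - F 0 = ∫ u in (0:ℝ)..t, exp (Λ u) * g u ^ k := by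
    intro t ht
    rw [← intervalIntegral.integral_eq_sub_of_hasDerivAt
      (fun u hu => hFd u (by rw [Set.uIcc_of_le ht] at hu; exact hu.1))
      (hcontI.intervalIntegrable 0 t)]
  have hF0 : F 0 = R 0 := by simp [hFdef, hΛ0]
  have hexpΛpos : ∀ t : ℝ, 0 < exp (Λ t) := fun t => exp_pos _
  -- explicit formula
  have hRformula : ∀ t : ℝ, 0 ≤ t →
      R t = exp (-(Λ t)) * (R 0 + ∫ u in (0:ℝ)..t, exp (Λ u) * g u ^ k) := by
    intro t ht
    have h := hFeq t ht
    rw [hF0] at h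
    have : F t = R 0 + ∫ u in (0:ℝ)..t, exp (Λ u) * g u ^ k := by linarith
    have hFt : R t * exp (Λ t) = R 0 + ∫ u in (0:ℝ)..t, exp (Λ u) * g u ^ k := this
    rw [← hFt, exp_neg]
    field_simp
  have hM0 : 0 ≤ M := le_trans (abs_nonneg _) (hM 0 le_rfl)
  have hgkM : ∀ u : ℝ, 0 ≤ u → g u ^ k ≤ M ^ k := by
    intro u hu
    calc g u ^ k = |g u ^ k| := (abs_of_nonneg (hgk u hu)).symm
      _ = |g u| ^ k := by rw [abs_pow]
      _ ≤ M ^ k := pow_le_pow_left₀ (abs_nonneg _) (hM u hu) k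
  -- Upper bound
  refine ⟨exp (-(lamMax * T)) * min (R 0) μ, R 0 + M ^ k / lamMin, ?_, ?_, ?_⟩
  · positivity
  · have : 0 ≤ M ^ k / lamMin := by positivity
    linarith
  intro t ht
  constructor
  · -- lower bound
    rcases le_or_gt t T with hle | hgt
    · -- t ≤ T : R t ≥ exp(-Λ t) R 0 ≥ exp(-lamMax T) R 0
      have hint : 0 ≤ ∫ u in (0:ℝ)..t, exp (Λ u) * g u ^ k := by
        apply intervalIntegral.integral_nonneg ht
        intro x hx
        exact mul_nonneg (le_of_lt (exp_pos _)) (hgk x hx.1)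
      have hΛt : Λ t ≤ lamMax * T := by
        have := hΛub 0 t le_rfl ht
        have hlamMax : 0 < lamMax :=
          lt_of_lt_of_le hlamMin (le_trans (hlam_bd 0 le_rfl).1 (hlam_bd 0 le_rfl).2)
        nlinarith
      have h1 : exp (-(lamMax * T)) ≤ exp (-(Λ t)) := exp_le_exp.2 (by linarith)
      calc exp (-(lamMax * T)) * min (R 0) μ
          ≤ exp (-(Λ t)) * R 0 := by
            apply mul_le_mul h1 (min_le_left _ _) (le_of_lt (lt_min hR0 hμ)) (le_of_lt (exp_pos _))
        _ ≤ exp (-(Λ t)) * (R 0 + ∫ u in (0:ℝ)..t, exp (Λ u) * g u ^ k) := by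
            apply mul_le_mul_of_nonneg_left (by linarith) (le_of_lt (exp_pos _))
        _ = R t := (hRformula t ht).symm
    · -- t > T
      have htT : 0 ≤ t - T := by linarith
      have hsplit : (∫ u in (0:ℝ)..t, exp (Λ u) * g u ^ k)
          = (∫ u in (0:ℝ)..(t-T), exp (Λ u) * g u ^ k)
            + ∫ u in (t-T)..t, exp (Λ u) * g u ^ k := by
        rw [intervalIntegral.integral_add_adjacent_intervals
          (hcontI.intervalIntegrable _ _) (hcontI.intervalIntegrable _ _)]
      have h1 : 0 ≤ ∫ u in (0:ℝ)..(t-T), exp (Λ u) * g u ^ k := by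
        apply intervalIntegral.integral_nonneg htT
        intro x hx
        exact mul_nonneg (le_of_lt (exp_pos _)) (hgk x hx.1)
      have h2 : exp (Λ (t-T)) * μ ≤ ∫ u in (t-T)..t, exp (Λ u) * g u ^ k := by
        have hPE' := hPE (t-T) htT
        rw [sub_add_cancel] at hPE'
        calc exp (Λ (t-T)) * μ
            ≤ exp (Λ (t-T)) * ∫ u in (t-T)..t, g u ^ k :=
              mul_le_mul_of_nonneg_left hPE' (le_of_lt (exp_pos _))
          _ = ∫ u in (t-T)..t, exp (Λ (t-T)) * g u ^ k := by
              rw [intervalIntegral.integral_const_mul]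
          _ ≤ ∫ u in (t-T)..t, exp (Λ u) * g u ^ k := by
              apply intervalIntegral.integral_mono_on (by linarith)
                ((continuous_const.mul (hg_cont.pow k)).intervalIntegrable _ _)
                (hcontI.intervalIntegrable _ _)
              intro x hx
              apply mul_le_mul_of_nonneg_right _ (hgk x (le_trans htT hx.1))
              apply exp_le_exp.2
              -- Λ monotone on [0,∞)
              have : 0 ≤ ∫ s in (t-T)..x, lamHat s := by
                apply intervalIntegral.integral_nonneg hx.1
                intro y hy
                exact le_of_lt (lt_of_lt_of_le hlamMin (hlam_bd y (le_trans htT hy.1)).1)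
              have hd := hΛdiff (t-T) x
              linarith
      have h3 : Λ t - Λ (t-T) ≤ lamMax * T := by
        have := hΛub (t-T) t htT (by linarith)
        simpa using this
      have key : exp (Λ (t-T)) * μ ≤ R t * exp (Λ t) := by
        have hf := hRformula t ht
        have : R t * exp (Λ t) = R 0 + ∫ u in (0:ℝ)..t, exp (Λ u) * g u ^ k := by
          rw [hf, exp_neg]
          field_simp
        rw [this, hsplit]
        linarith
      have hRt : exp (Λ (t-T) - Λ t) * μ ≤ R t := by
        rw [exp_sub, div_mul_eq_mul_div, div_le_iff₀ (exp_pos _)]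
        linarith [key]
      calc exp (-(lamMax * T)) * min (R 0) μ
          ≤ exp (Λ (t-T) - Λ t) * μ := by
            apply mul_le_mul (exp_le_exp.2 (by linarith)) (min_le_right _ _)
              (le_of_lt (lt_min hR0 hμ)) (le_of_lt (exp_pos _))
        _ ≤ R t := hRt
  · -- upper bound
    -- ∫_0^t exp(Λ u) g^k ≤ (M^k/lamMin) (exp (Λ t) - 1)
    have hE : ∀ u : ℝ, HasDerivAt (fun s => exp (Λ s)) (lamHat u * exp (Λ u)) u := by
      intro u
      have := (hΛd u).exp
      convert this using 1
      ring
    have hEint : (∫ u in (0:ℝ)..t, lamHat u * exp (Λ u)) = exp (Λ t) - 1 := by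
      rw [intervalIntegral.integral_eq_sub_of_hasDerivAt
        (fun u _ => hE u)
        ((hlam_cont.mul (hΛcont.rexp)).intervalIntegrable 0 t)]
      simp [hΛ0]
    have hintle : (∫ u in (0:ℝ)..t, exp (Λ u) * g u ^ k)
        ≤ (M ^ k / lamMin) * (exp (Λ t) - 1) := by
      calc (∫ u in (0:ℝ)..t, exp (Λ u) * g u ^ k)
          ≤ ∫ u in (0:ℝ)..t, (M ^ k / lamMin) * (lamHat u * exp (Λ u)) := by
            apply intervalIntegral.integral_mono_on ht
              (hcontI.intervalIntegrable _ _)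
              ((continuous_const.mul (hlam_cont.mul (hΛcont.rexp))).intervalIntegrable _ _)
            intro x hx
            have hgx := hgkM x hx.1
            have hlx := (hlam_bd x hx.1).1
            have hex := le_of_lt (exp_pos (Λ x))
            have hgnn := hgk x hx.1
            simp only [Pi.mul_apply]
            rw [div_mul_eq_mul_div, le_div_iff₀ hlamMin]
            nlinarith [mul_le_mul_of_nonneg_right (mul_le_mul_of_nonneg_left hgx hex) hlamMin.le,
              mul_le_mul_of_nonneg_left (mul_le_mul_of_nonneg_left hlx (pow_nonneg hM0 k)) hex]
        _ = (M ^ k / lamMin) * (exp (Λ t) - 1) := by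
            rw [intervalIntegral.integral_const_mul, hEint]
    have hf := hRformula t ht
    have hΛtnn := hΛnn t ht
    have hexp1 : exp (-(Λ t)) ≤ 1 := exp_le_one_iff.2 (by linarith)
    have hMk : 0 ≤ M ^ k / lamMin := by positivity
    calc R t = exp (-(Λ t)) * (R 0 + ∫ u in (0:ℝ)..t, exp (Λ u) * g u ^ k) := hf
      _ ≤ exp (-(Λ t)) * (R 0 + (M ^ k / lamMin) * (exp (Λ t) - 1)) := by
          apply mul_le_mul_of_nonneg_left (by linarith) (le_of_lt (exp_pos _))
      _ = exp (-(Λ t)) * R 0 + (M ^ k / lamMin) * (1 - exp (-(Λ t))) := by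
          rw [exp_neg]
          field_simp
      _ ≤ R 0 + M ^ k / lamMin := by
          have h1 : exp (-(Λ t)) * R 0 ≤ R 0 := by nlinarith [exp_pos (-(Λ t))]
          have h2 : (M ^ k / lamMin) * (1 - exp (-(Λ t))) ≤ M ^ k / lamMin := by
            nlinarith [exp_pos (-(Λ t))]
          linarith
end
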